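/- For a solution of g''(t) = 2F + c − 4B²g(t) with c ≤ 0 constant, B > 0, the first positive zero of g (when it exists) is a nonincreasing function of B when F < 0 and initial data g(0) = g₀ > 0, g'(0) = 0 are fixed; in particular as B → ∞ the blow-up time tends to 0. -/

import Mathlib

open Real Filter

lemma arccos_cos_le {x : ℝ} (hx : 0 ≤ x) : Real.arccos (Real.cos x) ≤ x := by
  rcases le_or_gt x π with h | h
  · rw [Real.arccos_cos hx h]
  · exact (Real.arccos_le_pi _).trans h.le

lemma tstar_closed (μ g₀ B : ℝ) (hμ : 0 < μ) (hg₀ : 0 < g₀) (hB : 0 < B) :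
    sInf {t : ℝ | 0 < t ∧ (-μ)/(4*B^2) + (g₀ - (-μ)/(4*B^2)) * Real.cos (2*B*t) = 0}
      = Real.arccos (μ/(4*g₀*B^2+μ)) / (2*B) := by
  have hD0 : 0 < 4*g₀*B^2+μ := by positivity
  have hk0 : 0 < μ/(4*g₀*B^2+μ) := by positivity
  have hk1 : μ/(4*g₀*B^2+μ) < 1 := (div_lt_one hD0).2 (by nlinarith [mul_pos hg₀ (pow_pos hB 2)])
  have key : ∀ x : ℝ, ((-μ)/(4*B^2) + (g₀ - (-μ)/(4*B^2)) * x = 0 ↔ x = μ/(4*g₀*B^2+μ)) := by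
    intro x
    rw [eq_div_iff hD0.ne']
    constructor
    · intro h
      field_simp at h
      have h2 : (4*B^2) * (x*(4*g₀*B^2+μ) - μ) = 0 := by linear_combination (4*B^2) * h
      have h3 := (mul_eq_zero.1 h2).resolve_left (by positivity)
      linarith
    · intro h
      field_simp
      linear_combination h
  apply IsLeast.csInf_eq
  constructor
  · constructor
    · exact div_pos (Real.arccos_pos.2 hk1) (by positivity)
    · rw [key]
      rw [show 2*B*(Real.arccos (μ/(4*g₀*B^2+μ))/(2*B)) = Real.arccos (μ/(4*g₀*B^2+μ)) by
        field_simp]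
      exact Real.cos_arccos (by linarith) hk1.le
  · rintro t ⟨htpos, heq⟩
    have hcos := (key _).1 heq
    have harc : Real.arccos (μ/(4*g₀*B^2+μ)) ≤ 2*B*t := by
      rw [← hcos]
      exact arccos_cos_le (by positivity)
    rw [div_le_iff₀ (by positivity : (0:ℝ) < 2*B)]
    linarith

lemma f_hasDeriv (μ g₀ B : ℝ) (hμ : 0 < μ) (hg₀ : 0 < g₀) (hB : 0 < B) :
    HasDerivAt (fun B => Real.arccos (μ/(4*g₀*B^2+μ)) / (2*B))
      ((8*g₀*μ*B/(4*g₀*B^2+μ)^2 / Real.sqrt (1 - (μ/(4*g₀*B^2+μ))^2) * (2*B)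
        - Real.arccos (μ/(4*g₀*B^2+μ)) * 2) / (2*B)^2) B := by
  have hD0 : 0 < 4*g₀*B^2+μ := by positivity
  have hk0 : 0 < μ/(4*g₀*B^2+μ) := by positivity
  have hk1 : μ/(4*g₀*B^2+μ) < 1 :=
    (div_lt_one hD0).2 (by nlinarith [mul_pos hg₀ (pow_pos hB 2)])
  have hden : HasDerivAt (fun B : ℝ => 4*g₀*B^2+μ) (4*g₀*(2*B)) B := by
    simpa using ((hasDerivAt_pow 2 B).const_mul (4*g₀)).add_const μ
  have hkD : HasDerivAt (fun B : ℝ => μ/(4*g₀*B^2+μ))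
      ((0 * (4*g₀*B^2+μ) - μ * (4*g₀*(2*B)))/(4*g₀*B^2+μ)^2) B :=
    (hasDerivAt_const B μ).div hden hD0.ne'
  have hθ := (Real.hasDerivAt_arccos (by linarith : μ/(4*g₀*B^2+μ) ≠ -1) hk1.ne).comp B hkD
  have h2B : HasDerivAt (fun B : ℝ => 2*B) 2 B := by simpa using (hasDerivAt_id B).const_mul 2
  have h := hθ.div h2B (by positivity)
  refine h.congr_deriv ?_
  simp only [Function.comp_apply]
  ring

lemma f_antitone (μ g₀ : ℝ) (hμ : 0 < μ) (hg₀ : 0 < g₀) :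
    AntitoneOn (fun B => Real.arccos (μ/(4*g₀*B^2+μ)) / (2*B)) (Set.Ioi (0:ℝ)) := by
  apply antitoneOn_of_deriv_nonpos (convex_Ioi 0)
  · intro B hB
    exact (f_hasDeriv μ g₀ B hμ hg₀ hB).continuousAt.continuousWithinAt
  · rw [interior_Ioi]
    intro B hB
    exact (f_hasDeriv μ g₀ B hμ hg₀ hB).differentiableAt.differentiableWithinAt
  · rw [interior_Ioi]
    intro B hB
    rw [(f_hasDeriv μ g₀ B hμ hg₀ hB).deriv]
    have hB0 : (0:ℝ) < B := hB
    have hD0 : 0 < 4*g₀*B^2+μ := by positivity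
    have hk0 : 0 < μ/(4*g₀*B^2+μ) := by positivity
    have hk1 : μ/(4*g₀*B^2+μ) < 1 :=
      (div_lt_one hD0).2 (by nlinarith [mul_pos hg₀ (pow_pos hB0 2)])
    have hk2 : (μ/(4*g₀*B^2+μ))^2 < 1 := by nlinarith
    have hs0 : 0 < Real.sqrt (1 - (μ/(4*g₀*B^2+μ))^2) := Real.sqrt_pos.2 (by linarith)
    have hss : (Real.sqrt (1 - (μ/(4*g₀*B^2+μ))^2))^2 = 1 - (μ/(4*g₀*B^2+μ))^2 :=
      Real.sq_sqrt (by linarith)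
    have hθs : Real.sqrt (1 - (μ/(4*g₀*B^2+μ))^2) ≤ Real.arccos (μ/(4*g₀*B^2+μ)) := by
      have h := Real.sin_le (Real.arccos_nonneg (μ/(4*g₀*B^2+μ)))
      rwa [Real.sin_arccos] at h
    apply div_nonpos_of_nonpos_of_nonneg _ (by positivity)
    have hY : 16*g₀*μ*B^2/(4*g₀*B^2+μ)^2 ≤ 2*(1 - (μ/(4*g₀*B^2+μ))^2) := by
      rw [show 2*(1 - (μ/(4*g₀*B^2+μ))^2) = (2*(4*g₀*B^2+μ)^2-2*μ^2)/(4*g₀*B^2+μ)^2 by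
        field_simp]
      rw [div_le_div_iff₀ (by positivity) (by positivity)]
      nlinarith [mul_pos hg₀ (pow_pos hB0 2), sq_nonneg (g₀*B^2)]
    have e1 : 8*g₀*μ*B/(4*g₀*B^2+μ)^2 / Real.sqrt (1 - (μ/(4*g₀*B^2+μ))^2) * (2*B)
        = (16*g₀*μ*B^2/(4*g₀*B^2+μ)^2) / Real.sqrt (1 - (μ/(4*g₀*B^2+μ))^2) := by
      ring
    have e2 : (16*g₀*μ*B^2/(4*g₀*B^2+μ)^2) / Real.sqrt (1 - (μ/(4*g₀*B^2+μ))^2)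
        ≤ 2 * Real.sqrt (1 - (μ/(4*g₀*B^2+μ))^2) := by
      rw [div_le_iff₀ hs0]
      have hms : Real.sqrt (1 - (μ/(4*g₀*B^2+μ))^2) * Real.sqrt (1 - (μ/(4*g₀*B^2+μ))^2)
          = 1 - (μ/(4*g₀*B^2+μ))^2 := Real.mul_self_sqrt (by linarith)
      nlinarith [hY, hms]
    linarith [e1 ▸ e2, hθs]

/-- For the solution of `g'' = 2F + c - 4B²g` (`c ≤ 0`, `F < 0`) with initial data
`g(0) = g₀ > 0`, `g'(0) = 0`, the first positive zero of `g` is a nonincreasing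
function of the field strength `B > 0`, and it tends to `0` as `B → ∞`. -/
theorem blowup_time_nonincreasing_in_B (F c g₀ : ℝ) (hF : F < 0) (hc : c ≤ 0)
    (hg₀ : 0 < g₀) (g : ℝ → ℝ → ℝ)
    (hgdef : ∀ B t, g B t = (2 * F + c) / (4 * B ^ 2)
      + (g₀ - (2 * F + c) / (4 * B ^ 2)) * Real.cos (2 * B * t))
    (tstar : ℝ → ℝ)
    (htstar : ∀ B, tstar B = sInf {t : ℝ | 0 < t ∧ g B t = 0}) :
    (∀ B, 0 < B → (∀ t, HasDerivAt (deriv (g B)) (2 * F + c - 4 * B ^ 2 * g B t) t) ∧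
      g B 0 = g₀ ∧ deriv (g B) 0 = 0) ∧
    AntitoneOn tstar (Set.Ioi (0:ℝ)) ∧
    Tendsto tstar atTop (nhds 0) := by
  have hμ : 0 < -(2*F+c) := by linarith
  -- closed form for tstar on positive B
  have hts : ∀ B : ℝ, 0 < B →
      tstar B = Real.arccos ((-(2*F+c))/(4*g₀*B^2 + -(2*F+c))) / (2*B) := by
    intro B hB
    rw [htstar B]
    have hset : {t : ℝ | 0 < t ∧ g B t = 0}
        = {t : ℝ | 0 < t ∧ (-(-(2*F+c)))/(4*B^2)
            + (g₀ - (-(-(2*F+c)))/(4*B^2)) * Real.cos (2*B*t) = 0} := by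
      ext t
      rw [Set.mem_setOf_eq, Set.mem_setOf_eq, hgdef B t]
      norm_num
    rw [hset, tstar_closed (-(2*F+c)) g₀ B hμ hg₀ hB]
  refine ⟨?_, ?_, ?_⟩
  · -- ODE and initial conditions
    intro B hB
    have hBne : (4*B^2 : ℝ) ≠ 0 := by positivity
    set a := (2*F+c)/(4*B^2) with ha
    have hfun : g B = fun t => a + (g₀ - a) * Real.cos (2*B*t) := funext fun t => hgdef B t
    have hlin : ∀ t : ℝ, HasDerivAt (fun t : ℝ => 2*B*t) (2*B) t := by
      intro t
      simpa using (hasDerivAt_id t).const_mul (2*B)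
    have hd1 : ∀ t, HasDerivAt (g B) (-((g₀ - a)*(2*B)) * Real.sin (2*B*t)) t := by
      intro t
      rw [hfun]
      have h2 := (Real.hasDerivAt_cos (2*B*t)).comp t (hlin t)
      have h3 := (h2.const_mul (g₀ - a)).const_add a
      refine h3.congr_deriv ?_
      ring
    have hderiv : deriv (g B) = fun t => -((g₀ - a)*(2*B)) * Real.sin (2*B*t) :=
      funext fun t => (hd1 t).deriv
    have haB : 4*B^2*a = 2*F+c := by
      rw [ha]; field_simp
    refine ⟨?_, ?_, ?_⟩
    · intro t
      rw [hderiv]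
      have h2 := (Real.hasDerivAt_sin (2*B*t)).comp t (hlin t)
      have h3 := h2.const_mul (-((g₀ - a)*(2*B)))
      refine h3.congr_deriv ?_
      rw [hgdef B t]
      linear_combination haB
    · rw [hgdef]; simp
    · rw [hderiv]; simp
  · -- antitone
    intro B1 h1 B2 h2 h12
    rw [hts B1 h1, hts B2 h2]
    exact f_antitone (-(2*F+c)) g₀ hμ hg₀ h1 h2 h12
  · -- tendsto
    apply tendsto_of_tendsto_of_tendsto_of_le_of_le' tendsto_const_nhds
      (show Tendsto (fun B : ℝ => π/(2*B)) atTop (nhds 0) by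
        have h := tendsto_inv_atTop_zero.const_mul (π/2)
        simp only [mul_zero] at h
        convert h using 2 with B
        ring)
    · filter_upwards [eventually_gt_atTop (0:ℝ)] with B hB
      rw [hts B hB]
      exact div_nonneg (Real.arccos_nonneg _) (by positivity)
    · filter_upwards [eventually_gt_atTop (0:ℝ)] with B hB
      rw [hts B hB]
      gcongr
      exact Real.arccos_le_pi _
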